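/- Let φ : ℝⁿ → ℝ be continuously differentiable and bounded from below, let a, b > 0, let (x^k) satisfy the sufficient-decrease condition (H1) and the relative-error condition (H2), let x̄ be an accumulation point of (x^k), and suppose φ satisfies the exponent PLK condition at x̄ with exponent q ∈ (0, 1/2) and some constant M > 0. Then either there exists K ∈ ℕ such that φ(x^k) = φ(x̄) for all k ≥ K, or φ(x^k) > φ(x̄) for all k and (φ(x^{k+1}) − φ(x̄))/(φ(x^k) − φ(x̄)) → 0 as k → ∞ (Q-superlinear convergence of the values to φ(x̄)). -/

import Mathlib

open Filter Topology

lemma aux_rpow_tangent {p s t : ℝ} (hp0 : 0 < p) (hp1 : p ≤ 1) (ht0 : 0 ≤ t)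
    (hts : t ≤ s) (hs : 0 < s) :
    p * s ^ (p - 1) * (s - t) ≤ s ^ p - t ^ p := by
  have h1 : t ^ p * s ^ (1 - p) ≤ p * t + (1 - p) * s :=
    Real.geom_mean_le_arith_mean2_weighted hp0.le (by linarith) ht0 hs.le (by ring)
  have hsp1 : (0:ℝ) < s ^ (p - 1) := Real.rpow_pos_of_pos hs _
  have h2 : t ^ p * s ^ (1 - p) * s ^ (p - 1) ≤ (p * t + (1 - p) * s) * s ^ (p - 1) :=
    mul_le_mul_of_nonneg_right h1 hsp1.le
  have e1 : s ^ (1 - p) * s ^ (p - 1) = 1 := by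
    rw [← Real.rpow_add hs]; norm_num
  have e2 : s * s ^ (p - 1) = s ^ p := by
    nth_rewrite 1 [← Real.rpow_one s]
    rw [← Real.rpow_add hs]; ring_nf
  have h3 : t ^ p ≤ p * t * s ^ (p - 1) + (1 - p) * s ^ p := by
    calc t ^ p = t ^ p * (s ^ (1 - p) * s ^ (p - 1)) := by rw [e1, mul_one]
      _ = t ^ p * s ^ (1 - p) * s ^ (p - 1) := by ring
      _ ≤ (p * t + (1 - p) * s) * s ^ (p - 1) := h2
      _ = p * t * s ^ (p - 1) + (1 - p) * (s * s ^ (p - 1)) := by ring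
      _ = p * t * s ^ (p - 1) + (1 - p) * s ^ p := by rw [e2]
  nlinarith [h3, e2]

set_option maxHeartbeats 2000000 in
lemma aux_superlinear {E : Type*} [NormedAddCommGroup E]
    (x : ℕ → E) (xbar : E)
    (a b M q ε η : ℝ) (ha : 0 < a) (hb : 0 < b) (hM : 0 < M)
    (hq0 : 0 < q) (hq2 : q < 1/2)
    (hε : 0 < ε) (hη : 0 < η)
    (r d : ℕ → ℝ)
    (hd : ∀ k, d k = ‖x (k + 1) - x k‖)
    (hrpos : ∀ k, 0 < r k)
    (hranti : Antitone r)
    (hrlim : Tendsto r atTop (𝓝 0))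
    (hxlim : ∃ σ : ℕ → ℕ, StrictMono σ ∧ Tendsto (fun j => x (σ j)) atTop (𝓝 xbar))
    (hH1 : ∀ k, a * d k ^ 2 ≤ r k - r (k + 1))
    (hgrad : ∀ k, ‖x (k + 1) - xbar‖ < ε → r (k + 1) < η →
      (1 / (M * (1 - q))) * r (k + 1) ^ q ≤ b * d k) :
    Tendsto (fun k => r (k + 1) / r k) atTop (𝓝 0) := by
  have hq1 : q < 1 := by linarith
  have hq1' : (0:ℝ) < 1 - q := by linarith
  have hMq : (0:ℝ) < M * (1 - q) := mul_pos hM hq1'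
  set c : ℝ := 1 / (M * (1 - q)) with hcdef
  have hc : 0 < c := by positivity
  set ψ : ℝ → ℝ := fun s => M * s ^ (1 - q) with hψdef
  have hψnn : ∀ k, 0 ≤ ψ (r k) := fun k => by
    have := Real.rpow_nonneg (hrpos k).le (1 - q)
    simp only [hψdef]; positivity
  have hd0 : ∀ k, 0 ≤ d k := fun k => by rw [hd]; positivity
  -- one-step inequality
  have step : ∀ k, ‖x (k + 1) - xbar‖ < ε → r (k + 1) < η →
      2 * d (k + 1) ≤ d k + (b / a) * (ψ (r (k + 1)) - ψ (r (k + 2))) := by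
    intro k hball hrη
    have hs := hrpos (k + 1)
    have ht := hrpos (k + 2)
    have hst : r (k + 2) ≤ r (k + 1) := hranti (Nat.le_succ _)
    have hKL' : c * r (k + 1) ^ q ≤ b * d k := hgrad k hball hrη
    have hSpos : 0 < r (k + 1) ^ q := Real.rpow_pos_of_pos hs q
    have hdk : 0 < d k := by nlinarith [mul_pos hc hSpos]
    have htang : (1 - q) * r (k + 1) ^ (-q) * (r (k + 1) - r (k + 2)) ≤
        r (k + 1) ^ (1 - q) - r (k + 2) ^ (1 - q) := by
      have h := aux_rpow_tangent (p := 1 - q) (s := r (k + 1)) (t := r (k + 2))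
        hq1' (by linarith) ht.le hst hs
      have e : (1 - q) - 1 = -q := by ring
      rwa [e] at h
    have hSinv : 0 < r (k + 1) ^ (-q) := Real.rpow_pos_of_pos hs _
    have hSS : r (k + 1) ^ (-q) * r (k + 1) ^ q = 1 := by
      rw [← Real.rpow_add hs]; simp
    have f2 : c ≤ r (k + 1) ^ (-q) * (b * d k) := by
      nlinarith [mul_le_mul_of_nonneg_left hKL' hSinv.le, hSS]
    have f4 : a * d (k + 1) ^ 2 ≤ r (k + 1) - r (k + 2) := hH1 (k + 1)
    have g1 : M * (b * d k) * ((1 - q) * r (k + 1) ^ (-q) * (r (k + 1) - r (k + 2))) ≤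
        M * (b * d k) * (r (k + 1) ^ (1 - q) - r (k + 2) ^ (1 - q)) :=
      mul_le_mul_of_nonneg_left htang (by positivity)
    have hst0 : 0 ≤ r (k + 1) - r (k + 2) := by linarith
    have g2 : (M * (1 - q) * (r (k + 1) - r (k + 2))) * c ≤
        (M * (1 - q) * (r (k + 1) - r (k + 2))) * (r (k + 1) ^ (-q) * (b * d k)) :=
      mul_le_mul_of_nonneg_left f2 (by positivity)
    have f3 : (M * (1 - q) * (r (k + 1) - r (k + 2))) * c = r (k + 1) - r (k + 2) := by
      rw [hcdef]; field_simp
    have g3 : r (k + 1) - r (k + 2) ≤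
        M * (b * d k) * (r (k + 1) ^ (1 - q) - r (k + 2) ^ (1 - q)) := by
      linarith [g1, g2, f3.le, f3.ge]
    have hkey : a * d (k + 1) ^ 2 ≤ (b * d k) * (ψ (r (k + 1)) - ψ (r (k + 2))) := by
      simp only [hψdef]
      linarith [g3, f4]
    have hΔ0 : 0 ≤ ψ (r (k + 1)) - ψ (r (k + 2)) := by
      nlinarith [hkey, sq_nonneg (d (k + 1)), mul_pos hb hdk]
    have hsq : (2 * d (k + 1)) ^ 2 ≤ (d k + (b / a) * (ψ (r (k + 1)) - ψ (r (k + 2)))) ^ 2 := by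
      have hdiv : d (k + 1) ^ 2 ≤ d k * ((b / a) * (ψ (r (k + 1)) - ψ (r (k + 2)))) := by
        rw [show d k * ((b / a) * (ψ (r (k + 1)) - ψ (r (k + 2)))) =
          (b * d k) * (ψ (r (k + 1)) - ψ (r (k + 2))) / a by ring, le_div_iff₀ ha]
        linarith [hkey]
      nlinarith [hdiv, sq_nonneg (d k - (b / a) * (ψ (r (k + 1)) - ψ (r (k + 2))))]
    have hrhs0 : 0 ≤ d k + (b / a) * (ψ (r (k + 1)) - ψ (r (k + 2))) := by
      have : 0 ≤ (b / a) * (ψ (r (k + 1)) - ψ (r (k + 2))) := by positivity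
      linarith [hd0 k]
    exact le_of_pow_le_pow_left₀ two_ne_zero hrhs0 hsq
  -- limits
  obtain ⟨σ, hσmono, hσtend⟩ := hxlim
  have hσge : ∀ j, j ≤ σ j := fun j => hσmono.le_apply
  have hdlim : Tendsto d atTop (𝓝 0) := by
    have h1 : Tendsto (fun k => (r k - r (k + 1)) / a) atTop (𝓝 0) := by
      have h2 := (hrlim.sub (hrlim.comp (tendsto_add_atTop_nat 1))).div_const a
      simpa using h2
    have hsq : Tendsto (fun k => Real.sqrt ((r k - r (k + 1)) / a)) atTop (𝓝 0) := by
      have h3 := (Real.continuous_sqrt.tendsto 0).comp h1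
      simpa [Function.comp_def] using h3
    apply squeeze_zero hd0 _ hsq
    intro k
    rw [← Real.sqrt_sq (hd0 k)]
    apply Real.sqrt_le_sqrt
    rw [le_div_iff₀ ha]
    nlinarith [hH1 k]
  -- smallness of ψ
  set δ : ℝ := (a * ε / (4 * b * M)) ^ (1 / (1 - q)) with hδdef
  have hδpos : 0 < δ := Real.rpow_pos_of_pos (by positivity) _
  have hδψ : ∀ s : ℝ, 0 ≤ s → s < δ → (b / a) * ψ s ≤ ε / 4 := by
    intro s hs0 hsδ
    have h1 : s ^ (1 - q) ≤ δ ^ (1 - q) := Real.rpow_le_rpow hs0 hsδ.le hq1'.le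
    have h2 : δ ^ (1 - q) = a * ε / (4 * b * M) := by
      rw [hδdef, ← Real.rpow_mul (by positivity), one_div,
        inv_mul_cancel₀ (ne_of_gt hq1'), Real.rpow_one]
    have h3 : ψ s ≤ a * ε / (4 * b) := by
      simp only [hψdef]
      calc M * s ^ (1 - q) ≤ M * (a * ε / (4 * b * M)) := by
            rw [← h2]; exact mul_le_mul_of_nonneg_left h1 hM.le
        _ = a * ε / (4 * b) := by field_simp
    calc (b / a) * ψ s ≤ (b / a) * (a * ε / (4 * b)) :=
          mul_le_mul_of_nonneg_left h3 (by positivity)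
      _ = ε / 4 := by field_simp
  -- choose the starting index
  obtain ⟨NA, hNA⟩ := Metric.tendsto_atTop.mp hσtend (ε / 4) (by positivity)
  obtain ⟨NB, hNB⟩ := eventually_atTop.mp
    (hdlim.eventually_lt_const (show (0:ℝ) < ε / 4 by positivity))
  obtain ⟨NC, hNC⟩ := eventually_atTop.mp (hrlim.eventually_lt_const (lt_min hη hδpos))
  set J := max NA (NB + NC + 1) with hJdef
  have hJσ : J ≤ σ J := hσge J
  have hJ1 : NB + NC + 1 ≤ J := le_max_right _ _
  set N := σ J - 1 with hNdef
  have hNeq : N + 1 = σ J := by omega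
  have hball0 : ‖x (N + 1) - xbar‖ < ε / 4 := by
    rw [hNeq]
    have h := hNA J (le_max_left _ _)
    rwa [dist_eq_norm] at h
  have hdN : d N < ε / 4 := hNB N (by omega)
  have hrN : r (N + 1) < min η δ := hNC (N + 1) (by omega)
  have hrNη : r (N + 1) < η := lt_of_lt_of_le hrN (min_le_left _ _)
  have hrNδ : r (N + 1) < δ := lt_of_lt_of_le hrN (min_le_right _ _)
  have hψN : (b / a) * ψ (r (N + 1)) ≤ ε / 4 := hδψ _ (hrpos _).le hrNδ
  have hballε : ‖x (N + 1) - xbar‖ < ε := by linarith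
  have hBlt : ‖x (N + 1) - xbar‖ + d N + (b / a) * ψ (r (N + 1)) < ε := by linarith
  have hrη' : ∀ k, N + 1 ≤ k → r k < η := fun k hk => lt_of_le_of_lt (hranti hk) hrNη
  have htri : ∀ k, ‖x (k + 1) - xbar‖ ≤ d k + ‖x k - xbar‖ := by
    intro k
    rw [hd]
    exact norm_sub_le_norm_sub_add_norm_sub _ _ _
  have inv : ∀ m : ℕ, ‖x (N + 1 + m) - xbar‖ < ε ∧
      ‖x (N + 1 + m + 1) - xbar‖ + d (N + 1 + m) ≤
        ‖x (N + 1) - xbar‖ + d N + (b / a) * ψ (r (N + 1))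
          - (b / a) * ψ (r (N + 1 + m + 1)) := by
    intro m
    induction m with
    | zero =>
      simp only [Nat.add_zero]
      refine ⟨hballε, ?_⟩
      have hstep := step N hballε hrNη
      have htr := htri (N + 1)
      have hps : 0 ≤ (b / a) * ψ (r (N + 1 + 1)) :=
        mul_nonneg (by positivity) (hψnn _)
      have e1 : N + 1 + 1 = N + 2 := rfl
      rw [e1]
      linarith [hψnn (N + 2)]
    | succ m ih =>
      obtain ⟨ih1, ih2⟩ := ih
      have hps : 0 ≤ (b / a) * ψ (r (N + 1 + m + 1)) :=
        mul_nonneg (by positivity) (hψnn _)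
      have hball1 : ‖x (N + 1 + m + 1) - xbar‖ < ε := by
        linarith [hd0 (N + 1 + m)]
      have hstep := step (N + 1 + m) hball1 (hrη' (N + 1 + m + 1) (by omega))
      have htr := htri (N + 1 + m + 1)
      have e1 : N + 1 + (m + 1) = N + 1 + m + 1 := rfl
      rw [e1]
      refine ⟨hball1, ?_⟩
      have e2 : N + 1 + m + 1 + 1 = N + 1 + m + 2 := rfl
      rw [e2]
      have e3 : N + 1 + m + 2 = N + 1 + m + 1 + 1 := rfl
      linarith [hψnn (N + 1 + m + 2)]
  have hball : ∀ k, N + 1 ≤ k → ‖x k - xbar‖ < ε := by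
    intro k hk
    obtain ⟨m, rfl⟩ : ∃ m, k = N + 1 + m := ⟨k - (N + 1), by omega⟩
    exact (inv m).1
  -- superlinear ratio bound
  have hq2' : (0:ℝ) < 2 * q := by linarith
  set C : ℝ := b ^ 2 / (a * c ^ 2) with hCdef
  have hCpos : 0 < C := by positivity
  set ee : ℝ := 1 / (2 * q) - 1 with heedef
  have heepos : 0 < ee := by
    have h1 : 2 * q < 1 := by linarith
    have h2 := one_lt_one_div hq2' h1
    rw [heedef]; linarith
  have key : ∀ k, N + 1 ≤ k → r (k + 1) / r k ≤ C ^ (1 / (2 * q)) * r k ^ ee := by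
    intro k hk
    have hball1 : ‖x (k + 1) - xbar‖ < ε := hball (k + 1) (by omega)
    have h2 : c * r (k + 1) ^ q ≤ b * d k := hgrad k hball1 (hrη' (k + 1) (by omega))
    have h1 : a * d k ^ 2 ≤ r k - r (k + 1) := hH1 k
    have hs := hrpos (k + 1)
    have hsq2 : (c * r (k + 1) ^ q) ^ 2 ≤ (b * d k) ^ 2 := by
      apply pow_le_pow_left₀ (by positivity) h2
    have e2q : r (k + 1) ^ (2 * q) = r (k + 1) ^ q * r (k + 1) ^ q := by
      rw [← Real.rpow_add hs]; ring_nf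
    have step1 : r (k + 1) ^ (2 * q) ≤ C * r k := by
      rw [e2q, hCdef, show b ^ 2 / (a * c ^ 2) * r k = b ^ 2 * r k / (a * c ^ 2) by ring,
        le_div_iff₀ (by positivity)]
      have A1 : a * (c * r (k + 1) ^ q) ^ 2 ≤ a * (b * d k) ^ 2 :=
        mul_le_mul_of_nonneg_left hsq2 ha.le
      have A2 : b ^ 2 * (a * d k ^ 2) ≤ b ^ 2 * (r k - r (k + 1)) :=
        mul_le_mul_of_nonneg_left h1 (by positivity)
      have A3 : 0 ≤ b ^ 2 * r (k + 1) := mul_nonneg (by positivity) hs.le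
      linarith [A1, A2, A3]
    have step2 : r (k + 1) ≤ C ^ (1 / (2 * q)) * r k ^ (1 / (2 * q)) := by
      have hmono := Real.rpow_le_rpow (Real.rpow_nonneg hs.le _) step1
        (by positivity : (0:ℝ) ≤ 1 / (2 * q))
      have eL : (r (k + 1) ^ (2 * q)) ^ (1 / (2 * q)) = r (k + 1) := by
        rw [← Real.rpow_mul hs.le, mul_one_div, div_self (ne_of_gt hq2'), Real.rpow_one]
      have eR : (C * r k) ^ (1 / (2 * q)) = C ^ (1 / (2 * q)) * r k ^ (1 / (2 * q)) :=
        Real.mul_rpow hCpos.le (hrpos k).le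
      rw [eL, eR] at hmono
      exact hmono
    have eSplit : C ^ (1 / (2 * q)) * r k ^ (1 / (2 * q)) =
        (C ^ (1 / (2 * q)) * r k ^ ee) * r k := by
      have h4 : r k ^ (1 / (2 * q)) = r k ^ ee * r k := by
        conv_lhs => rw [show (1 / (2 * q)) = ee + 1 by rw [heedef]; ring]
        rw [Real.rpow_add (hrpos k), Real.rpow_one]
      rw [h4]; ring
    rw [div_le_iff₀ (hrpos k)]
    calc r (k + 1) ≤ C ^ (1 / (2 * q)) * r k ^ (1 / (2 * q)) := step2
      _ = (C ^ (1 / (2 * q)) * r k ^ ee) * r k := eSplit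
  have hre : Tendsto (fun k => r k ^ ee) atTop (𝓝 0) := by
    have hcont : ContinuousAt (fun s : ℝ => s ^ ee) 0 :=
      Real.continuousAt_rpow_const 0 ee (Or.inr heepos.le)
    have h := hcont.tendsto.comp hrlim
    simpa [Function.comp_def, Real.zero_rpow heepos.ne'] using h
  have hfin : Tendsto (fun k => C ^ (1 / (2 * q)) * r k ^ ee) atTop (𝓝 0) := by
    simpa using hre.const_mul (C ^ (1 / (2 * q)))
  exact squeeze_zero' (Eventually.of_forall fun k => div_nonneg (hrpos _).le (hrpos _).le)
    (eventually_atTop.2 ⟨N + 1, key⟩) hfin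

theorem value_superlinear_lower_exponent_H2
    (n : ℕ) (φ : EuclideanSpace ℝ (Fin n) → ℝ)
    (hφ : ContDiff ℝ 1 φ)
    (hbdd : ∃ m : ℝ, ∀ x, m ≤ φ x)
    (a b : ℝ) (ha : 0 < a) (hb : 0 < b)
    (x : ℕ → EuclideanSpace ℝ (Fin n))
    (hH1 : ∀ k : ℕ, φ (x (k + 1)) + a * ‖x (k + 1) - x k‖ ^ 2 ≤ φ (x k))
    (hH2 : ∀ k : ℕ, ‖gradient φ (x (k + 1))‖ ≤ b * ‖x (k + 1) - x k‖)
    (xbar : EuclideanSpace ℝ (Fin n))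
    (hacc : ∃ σ : ℕ → ℕ, StrictMono σ ∧
      Tendsto (fun j => x (σ j)) atTop (𝓝 xbar))
    (q : ℝ) (hq : q ∈ Set.Ioo (0 : ℝ) (1/2))
    (M : ℝ) (hM : 0 < M)
    (hPLK : ∃ ε η : ℝ, 0 < ε ∧ 0 < η ∧
      ∀ y, ‖y - xbar‖ < ε → φ xbar < φ y → φ y < φ xbar + η →
        (1 / (M * (1 - q))) * (φ y - φ xbar) ^ q ≤ ‖gradient φ y‖) :
    (∃ K : ℕ, ∀ k ≥ K, φ (x k) = φ xbar) ∨
      ((∀ k : ℕ, φ xbar < φ (x k)) ∧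
        Tendsto (fun k => (φ (x (k + 1)) - φ xbar) / (φ (x k) - φ xbar))
          atTop (𝓝 0)) := by
  obtain ⟨ε, η, hε, hη, hKL⟩ := hPLK
  obtain ⟨m, hm⟩ := hbdd
  obtain ⟨hq0, hq2⟩ := hq
  have hmono : ∀ k, φ (x (k + 1)) ≤ φ (x k) := by
    intro k
    have h := hH1 k
    have h2 : 0 ≤ a * ‖x (k + 1) - x k‖ ^ 2 := by positivity
    linarith
  have hAnti : Antitone fun k => φ (x k) := antitone_nat_of_succ_le hmono
  have hbdd' : BddBelow (Set.range fun k => φ (x k)) := ⟨m, by rintro y ⟨k, rfl⟩; exact hm _⟩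
  have hlim : Tendsto (fun k => φ (x k)) atTop (𝓝 (⨅ k, φ (x k))) :=
    tendsto_atTop_ciInf hAnti hbdd'
  obtain ⟨σ, hσ, hσx⟩ := hacc
  have hsub : Tendsto (fun j => φ (x (σ j))) atTop (𝓝 (⨅ k, φ (x k))) :=
    hlim.comp hσ.tendsto_atTop
  have hsub2 : Tendsto (fun j => φ (x (σ j))) atTop (𝓝 (φ xbar)) :=
    (hφ.continuous.tendsto xbar).comp hσx
  have hInf : (⨅ k, φ (x k)) = φ xbar := tendsto_nhds_unique hsub hsub2
  have hlim0 : Tendsto (fun k => φ (x k)) atTop (𝓝 (φ xbar)) := hInf ▸ hlim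
  have hge : ∀ k, φ xbar ≤ φ (x k) := fun k => hInf ▸ ciInf_le hbdd' k
  by_cases hzero : ∃ K, φ (x K) = φ xbar
  · left
    obtain ⟨K, hK⟩ := hzero
    exact ⟨K, fun k hk => le_antisymm (hK ▸ hAnti hk) (hge k)⟩
  · right
    push_neg at hzero
    have hpos : ∀ k, φ xbar < φ (x k) := fun k => lt_of_le_of_ne (hge k) (Ne.symm (hzero k))
    refine ⟨hpos, ?_⟩
    have hrlim : Tendsto (fun k => φ (x k) - φ xbar) atTop (𝓝 0) := by
      simpa using hlim0.sub_const (φ xbar)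
    have hranti : Antitone fun k => φ (x k) - φ xbar :=
      fun i j hij => sub_le_sub_right (hAnti hij) _
    exact aux_superlinear x xbar a b M q ε η ha hb hM hq0 hq2 hε hη
      (fun k => φ (x k) - φ xbar) (fun k => ‖x (k + 1) - x k‖)
      (fun k => rfl)
      (fun k => sub_pos.mpr (hpos k))
      hranti
      hrlim
      ⟨σ, hσ, hσx⟩
      (fun k => by have h := hH1 k; show a * ‖x (k + 1) - x k‖ ^ 2 ≤ (φ (x k) - φ xbar) - (φ (x (k + 1)) - φ xbar); linarith)
      (by
        intro k hb1 hb2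
        have hb2' : φ (x (k + 1)) - φ xbar < η := hb2
        have h3 : φ (x (k + 1)) < φ xbar + η := by linarith
        exact le_trans (hKL (x (k + 1)) hb1 (hpos _) h3) (hH2 k))
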